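/- Let N ≥ 1, let Π : ℝ → M_N(ℂ) be continuously differentiable with Π(w)² = Π(w) for all w, and set K(w) = −i[Π(w), Π′(w)]. Let x : ℝ → ℝ be C¹ and write ξ(t) = x′(t). Fix z ∈ ℝ and let Y : ℝ → ℂ^N be a C¹ solution of i Y′(t) = ξ(t) K(x(t) + z) Y(t). If Π(x(0) + z) Y(0) = Y(0), then Π(x(t) + z) Y(t) = Y(t) for all t ∈ ℝ. -/

import Mathlib

open Set

/-- A linear ODE with continuous coefficient matrix and zero initial data has only
the zero solution. -/
lemma linear_ode_zero {n : ℕ} (A : ℝ → Matrix (Fin n) (Fin n) ℂ)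
    (hA : Continuous A) (Z : ℝ → Fin n → ℂ)
    (hZ : ∀ t, HasDerivAt Z ((A t).mulVec (Z t)) t) (h0 : Z 0 = 0) : ∀ t, Z t = 0 := by
  -- bundle matrices as continuous linear maps
  let T : Matrix (Fin n) (Fin n) ℂ →ₗ[ℂ] ((Fin n → ℂ) →L[ℂ] (Fin n → ℂ)) :=
    (LinearMap.toContinuousLinearMap.toLinearMap).comp Matrix.toLin'.toLinearMap
  have hTapp : ∀ M v, T M v = M.mulVec v := fun M v => rfl
  have hTcont : Continuous T := T.continuous_of_finiteDimensional
  intro t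
  set a : ℝ := -(|t| + 1) with ha
  set b : ℝ := |t| + 1 with hb
  have hab : a < b := by
    have : (0:ℝ) < |t| + 1 := by positivity
    simp only [ha, hb]; linarith
  have h0ab : (0:ℝ) ∈ Ioo a b := by
    constructor <;> simp only [ha, hb] <;> [linarith [abs_nonneg t]; linarith [abs_nonneg t]]
  -- clamp
  set c : ℝ → ℝ := fun s => max a (min b s) with hc
  have hccont : Continuous c := continuous_const.max (continuous_const.min continuous_id)
  have hcmem : ∀ s, c s ∈ Icc a b := fun s =>
    ⟨le_max_left _ _, max_le (le_of_lt hab) (min_le_left _ _)⟩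
  have hceq : ∀ s ∈ Icc a b, c s = s := by
    intro s hs
    simp only [hc]
    rw [min_eq_right hs.2, max_eq_right hs.1]
  -- bound on the norm
  obtain ⟨s₀, hs₀, hbd⟩ := isCompact_Icc.exists_isMaxOn (nonempty_Icc.mpr hab.le)
    (((hTcont.comp hA).norm).continuousOn :
      ContinuousOn (fun s => ‖T (A s)‖) (Icc a b))
  set K : NNReal := ‖T (A s₀)‖₊ with hK
  set v : ℝ → (Fin n → ℂ) → (Fin n → ℂ) := fun s y => T (A (c s)) y with hv
  have hlip : ∀ s, LipschitzOnWith K (v s) univ := by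
    intro s
    refine ((T (A (c s))).lipschitz.weaken ?_).lipschitzOnWith
    have := hbd (hcmem s)
    simpa [hK, ← NNReal.coe_le_coe] using this
  have key : EqOn Z (fun _ => (0 : Fin n → ℂ)) (Icc a b) := by
    apply ODE_solution_unique_of_mem_Icc (s := fun _ => univ) (fun s _ => hlip s) h0ab
    · exact fun s hs => ((hZ s).continuousAt).continuousWithinAt
    · intro s hs
      have : v s (Z s) = (A s).mulVec (Z s) := by
        rw [hv]; simp only [hceq s (Ioo_subset_Icc_self hs)]; exact hTapp _ _
      rw [this]; exact hZ s
    · exact fun _ _ => trivial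
    · exact continuousOn_const
    · intro s hs
      have : v s (0 : Fin n → ℂ) = 0 := by simp [hv, map_zero]
      rw [this]; exact hasDerivAt_const _ _
    · exact fun _ _ => trivial
    · simpa using h0
  have ht : t ∈ Icc a b := by
    constructor
    · have := neg_abs_le t; simp only [ha]; linarith
    · have := le_abs_self t; simp only [hb]; linarith
  exact key ht



/-- parallel transport stays in the range of the projector.
If `Π : ℝ → M_N(ℂ)` is C¹ with `Π² = Π`, `K(w) = −i[Π(w), Π'(w)]` (entrywise
derivative), `ξ = x'`, and `Y` solves `iY'(t) = ξ(t) K(x(t)+z) Y(t)` with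
`Π(x(0)+z)Y(0) = Y(0)`, then `Π(x(t)+z)Y(t) = Y(t)` for all `t`. -/
theorem parallel_transport_preserves_range
    (N : ℕ) (hN : 1 ≤ N)
    (Pi : ℝ → Matrix (Fin N) (Fin N) ℂ)
    (hPiC1 : ∀ i j : Fin N, ContDiff ℝ 1 fun w => Pi w i j)
    (hproj : ∀ w : ℝ, Pi w * Pi w = Pi w)
    (K : ℝ → Matrix (Fin N) (Fin N) ℂ)
    (hK : ∀ w : ℝ, K w =
      (-Complex.I) •
        (Pi w * (Matrix.of fun i j : Fin N => deriv (fun v => Pi v i j) w)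
          - (Matrix.of fun i j : Fin N => deriv (fun v => Pi v i j) w) * Pi w))
    (x : ℝ → ℝ) (hx : ContDiff ℝ 1 x) (ξ : ℝ → ℝ) (hξ : ξ = deriv x)
    (z : ℝ)
    (Y : ℝ → (Fin N → ℂ))
    (hY : ∀ t : ℝ, HasDerivAt Y ((-Complex.I) • (ξ t • (K (x t + z)).mulVec (Y t))) t)
    (hY0 : (Pi (x 0 + z)).mulVec (Y 0) = Y 0) :
    ∀ t : ℝ, (Pi (x t + z)).mulVec (Y t) = Y t := by
  set D : ℝ → Matrix (Fin N) (Fin N) ℂ :=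
    fun w => Matrix.of fun i j : Fin N => deriv (fun v => Pi v i j) w with hD_def
  set P : ℝ → Matrix (Fin N) (Fin N) ℂ := fun t => Pi (x t + z) with hP_def
  set A : ℝ → Matrix (Fin N) (Fin N) ℂ := fun t => ξ t • D (x t + z) with hA_def
  set Z : ℝ → Fin N → ℂ := fun t => Y t - (P t).mulVec (Y t) with hZ_def
  -- basic derivative facts
  have hPdiff : ∀ i j : Fin N, Differentiable ℝ (fun w => Pi w i j) :=
    fun i j => (hPiC1 i j).differentiable one_ne_zero
  have hD : ∀ (i j : Fin N) (w : ℝ), HasDerivAt (fun w => Pi w i j) (D w i j) w :=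
    fun i j w => (hPdiff i j w).hasDerivAt
  have hxdiff : Differentiable ℝ x := hx.differentiable one_ne_zero
  have hxt : ∀ t, HasDerivAt (fun t => x t + z) (ξ t) t := by
    intro t
    have h : HasDerivAt (fun t => x t + z) (deriv x t) t := (hxdiff t).hasDerivAt.add_const z
    rw [hξ]
    exact h
  have hP' : ∀ (i j : Fin N) (t : ℝ), HasDerivAt (fun t => P t i j) (A t i j) t := by
    intro i j t
    have h := HasDerivAt.scomp_of_eq t (hD i j (x t + z)) (hxt t) rfl
    show HasDerivAt (fun t => Pi (x t + z) i j) ((ξ t • D (x t + z)) i j) t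
    rw [Matrix.smul_apply]
    exact h
  -- differentiate the projector identity
  have hDid : ∀ w, D w * Pi w + Pi w * D w = D w := by
    intro w
    ext i j
    have h1 : HasDerivAt (fun w => ∑ k, Pi w i k * Pi w k j)
        ((D w * Pi w + Pi w * D w) i j) w := by
      have := HasDerivAt.fun_sum (u := Finset.univ)
        (fun k _ => ((hD i k w).mul (hD k j w)))
      simpa [Matrix.add_apply, Matrix.mul_apply, Finset.sum_add_distrib] using this
    have h2 : (fun w => ∑ k, Pi w i k * Pi w k j) = fun w => Pi w i j := by
      funext w
      rw [← Matrix.mul_apply, hproj w]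
    rw [h2] at h1
    exact h1.unique (hD i j w)
  have hA_id : ∀ t, A t * P t + P t * A t = A t := by
    intro t
    simp only [hA_def, hP_def, Matrix.smul_mul, Matrix.mul_smul, ← smul_add]
    rw [hDid]
  have hPP : ∀ t, P t * P t = P t := fun t => hproj _
  have hPAP : ∀ t, P t * (A t * P t) = 0 := by
    intro t
    have h : P t * (A t * P t) + P t * A t = P t * A t := by
      calc P t * (A t * P t) + P t * A t
          = P t * (A t * P t) + (P t * P t) * A t := by rw [hPP]
        _ = P t * (A t * P t + P t * A t) := by rw [mul_add, mul_assoc]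
        _ = P t * A t := by rw [hA_id]
    exact add_eq_right.mp h
  -- rewrite the given ODE for Y
  have hY2 : ∀ t, HasDerivAt Y ((A t * P t - P t * A t).mulVec (Y t)) t := by
    intro t
    have h := hY t
    have he : (-Complex.I) • (ξ t • (K (x t + z)).mulVec (Y t))
        = (A t * P t - P t * A t).mulVec (Y t) := by
      rw [hK]
      rw [Matrix.smul_mulVec, smul_comm (ξ t) (-Complex.I), smul_smul,
        neg_mul_neg, Complex.I_mul_I, neg_smul, one_smul]
      simp only [hA_def, hP_def, hD_def, Matrix.smul_mul, Matrix.mul_smul,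
        Matrix.sub_mulVec, Matrix.smul_mulVec, smul_sub, neg_sub]
    rwa [he] at h
  -- derivative of Z
  have hZ' : ∀ t, HasDerivAt Z ((-(A t)).mulVec (Z t)) t := by
    intro t
    have hPY : HasDerivAt (fun t => (P t).mulVec (Y t))
        ((A t).mulVec (Y t) + (P t).mulVec ((A t * P t - P t * A t).mulVec (Y t))) t := by
      rw [hasDerivAt_pi]
      intro i
      have hYc : ∀ j : Fin N, HasDerivAt (fun t => Y t j)
          (((A t * P t - P t * A t).mulVec (Y t)) j) t :=
        fun j => (hasDerivAt_pi.mp (hY2 t)) j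
      have := HasDerivAt.fun_sum (u := Finset.univ)
        (fun j _ => ((hP' i j t).mul (hYc j)))
      simpa [Matrix.mulVec, dotProduct, _root_.Pi.add_apply, Finset.sum_add_distrib,
        Matrix.sub_apply, Finset.mul_sum, -Matrix.mulVec_mulVec] using this
    have h := (hY2 t).sub hPY
    have e2 : P t * (A t * P t - P t * A t) = -(P t * A t) := by
      rw [mul_sub, hPAP t, ← mul_assoc, hPP t, zero_sub]
    have he : (A t * P t - P t * A t).mulVec (Y t)
        - ((A t).mulVec (Y t) + (P t).mulVec ((A t * P t - P t * A t).mulVec (Y t)))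
        = (-(A t)).mulVec (Z t) := by
      simp only [hZ_def]
      rw [Matrix.mulVec_mulVec, e2]
      simp only [Matrix.neg_mulVec, Matrix.mulVec_sub, Matrix.sub_mulVec,
        Matrix.mulVec_mulVec, neg_mul, Matrix.mulVec_neg]
      abel
    rwa [he] at h
  -- continuity of the coefficient
  have hξc : Continuous ξ := by rw [hξ]; exact hx.continuous_deriv le_rfl
  have hAc : Continuous fun t => -(A t) := by
    apply Continuous.neg
    apply continuous_pi; intro i; apply continuous_pi; intro j
    simp only [hA_def, Matrix.smul_apply, hD_def, Matrix.of_apply]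
    exact hξc.smul (((hPiC1 i j).continuous_deriv le_rfl).comp
      (hx.continuous.add continuous_const))
  have hZ0 : Z 0 = 0 := by simp [hZ_def, hP_def, hY0]
  have hzero := linear_ode_zero (fun t => -(A t)) hAc Z hZ' hZ0
  intro t
  have := hzero t
  simp only [hZ_def, sub_eq_zero] at this
  exact this.symm
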